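/- arXiv:1504.07368 — 2 statements merged into one kernel-verified Lean document; each statement's English description precedes it below -/
import Mathlib

section
/- Let $c_2, c_2' > 0$ and let $G$ be an $m\times n$ real matrix of full rank with $n \le m$ (so $G^*G$ is positive definite). Then the matrix Riccati terminal value problem $-\dot K(t) = -c_2' K(t)^2 + c_2 G^*G$ on $[0,T]$ with $K(T) = \lambda G^*G$, where $\lambda \ge 0$, has a unique solution $K \in C^1([0,T]; S^n)$ which is symmetric nonnegative definite for every $t\in[0,T]$. -/
open Matrix Set

namespace RiccatiAux


/-- scalar building blocks -/
noncomputable def sden (L b w T t : ℝ) : ℝ :=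
  b * Real.cosh (w * (T - t)) + L * Real.sinh (w * (T - t))

noncomputable def snum (L b w T t : ℝ) : ℝ :=
  L * Real.cosh (w * (T - t)) + b * Real.sinh (w * (T - t))

noncomputable def sk (L b w T t : ℝ) : ℝ := b * snum L b w T t / sden L b w T t

lemma sden_pos {L b w T t : ℝ} (hb : 0 < b) (hL : 0 ≤ L) (hw : 0 ≤ w) (ht : t ≤ T) :
    0 < sden L b w T t := by
  have h1 : (1:ℝ) ≤ Real.cosh (w * (T - t)) := Real.one_le_cosh _
  have h2 : 0 ≤ Real.sinh (w * (T - t)) := by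
    rw [Real.sinh_nonneg_iff]
    exact mul_nonneg hw (by linarith)
  unfold sden
  nlinarith

lemma snum_nonneg {L b w T t : ℝ} (hb : 0 < b) (hL : 0 ≤ L) (hw : 0 ≤ w) (ht : t ≤ T) :
    0 ≤ snum L b w T t := by
  have h1 : (1:ℝ) ≤ Real.cosh (w * (T - t)) := Real.one_le_cosh _
  have h2 : 0 ≤ Real.sinh (w * (T - t)) := by
    rw [Real.sinh_nonneg_iff]
    exact mul_nonneg hw (by linarith)
  unfold snum
  nlinarith

lemma sk_nonneg {L b w T t : ℝ} (hb : 0 < b) (hL : 0 ≤ L) (hw : 0 ≤ w) (ht : t ≤ T) :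
    0 ≤ sk L b w T t := by
  have := sden_pos hb hL hw ht
  have := snum_nonneg hb hL hw ht
  unfold sk
  positivity

lemma sk_T {L b w T : ℝ} (hb : 0 < b) : sk L b w T T = L := by
  unfold sk snum sden
  simp [Real.cosh_zero, Real.sinh_zero]
  field_simp

lemma sk_hasDerivAt {c₂' L b w T : ℝ} (hb : 0 < b) (hL : 0 ≤ L) (hw : 0 ≤ w)
    (hb2 : c₂' * b ^ 2 = b * w) {t : ℝ} (ht : t ≤ T) :
    HasDerivAt (fun s => sk L b w T s)
      (c₂' * (sk L b w T t) ^ 2 - b * w) t := by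
  have hu : HasDerivAt (fun s : ℝ => w * (T - s)) (-w) t := by
    simpa using (((hasDerivAt_id t).const_sub T).const_mul w)
  have hcosh : HasDerivAt (fun s : ℝ => Real.cosh (w * (T - s)))
      (Real.sinh (w * (T - t)) * (-w)) t := (Real.hasDerivAt_cosh _).comp t hu
  have hsinh : HasDerivAt (fun s : ℝ => Real.sinh (w * (T - s)))
      (Real.cosh (w * (T - t)) * (-w)) t := (Real.hasDerivAt_sinh _).comp t hu
  have hN : HasDerivAt (fun s => snum L b w T s)
      (L * (Real.sinh (w * (T - t)) * (-w)) + b * (Real.cosh (w * (T - t)) * (-w))) t := by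
    unfold snum
    exact (hcosh.const_mul L).add (hsinh.const_mul b)
  have hD : HasDerivAt (fun s => sden L b w T s)
      (b * (Real.sinh (w * (T - t)) * (-w)) + L * (Real.cosh (w * (T - t)) * (-w))) t := by
    unfold sden
    exact (hcosh.const_mul b).add (hsinh.const_mul L)
  have hDne : sden L b w T t ≠ 0 := (sden_pos hb hL hw ht).ne'
  have h := ((hN.const_mul b).div hD hDne)
  refine HasDerivAt.congr_deriv h ?_
  symm
  unfold sk snum sden
  unfold snum sden at hDne
  have hch : Real.cosh (w * (T-t)) ^ 2 = 1 + Real.sinh (w * (T-t)) ^ 2 := by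
    have := Real.cosh_sq_sub_sinh_sq (w * (T-t))
    nlinarith [this]
  set c := Real.cosh (w * (T-t))
  set s := Real.sinh (w * (T-t))
  field_simp
  have hkb : c₂' * b = w := mul_left_cancel₀ hb.ne' (by linear_combination hb2)
  linear_combination (L * c + b * s) ^ 2 * hkb




lemma entry_formula {n : ℕ} (U : Matrix (Fin n) (Fin n) ℝ) (f : Fin n → ℝ) (i j : Fin n) :
    (U * Matrix.diagonal f * star U) i j = ∑ l, U i l * f l * U j l := by
  rw [Matrix.star_eq_conjTranspose, Matrix.mul_apply]
  apply Finset.sum_congr rfl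
  intro l _
  rw [Matrix.mul_diagonal, Matrix.conjTranspose_apply, star_trivial]

lemma conj_diag_mul {n : ℕ} (U : Matrix (Fin n) (Fin n) ℝ) (hU : star U * U = 1)
    (f g : Fin n → ℝ) :
    (U * Matrix.diagonal f * star U) * (U * Matrix.diagonal g * star U)
      = U * Matrix.diagonal (fun l => f l * g l) * star U := by
  calc (U * Matrix.diagonal f * star U) * (U * Matrix.diagonal g * star U)
      = U * Matrix.diagonal f * (star U * U) * Matrix.diagonal g * star U := by
        simp only [Matrix.mul_assoc]
    _ = U * (Matrix.diagonal f * Matrix.diagonal g) * star U := by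
        rw [hU, Matrix.mul_one, Matrix.mul_assoc U]
    _ = U * Matrix.diagonal (fun l => f l * g l) * star U := by
        rw [Matrix.diagonal_mul_diagonal]




lemma lip_aux (n : ℕ) (c₂' : ℝ) (hc₂' : 0 ≤ c₂') (A : Matrix (Fin n) (Fin n) ℝ) (c₂ : ℝ)
    (R : ℝ) (hR : 0 ≤ R) :
    LipschitzOnWith (Real.toNNReal (c₂' * (2 * n * R)))
      (fun x : Fin n → Fin n → ℝ =>
        (fun i j => (c₂' • (Matrix.of x * Matrix.of x) - c₂ • A) i j : Fin n → Fin n → ℝ))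
      (Metric.closedBall 0 R) := by
  apply LipschitzOnWith.of_dist_le_mul
  intro x hx y hy
  rw [Real.coe_toNNReal _ (by positivity)]
  have hd : (0:ℝ) ≤ dist x y := dist_nonneg
  have habs : ∀ u : Fin n → Fin n → ℝ, u ∈ Metric.closedBall (0 : Fin n → Fin n → ℝ) R →
      ∀ i l, |u i l| ≤ R := by
    intro u hu i l
    rw [Metric.mem_closedBall, dist_zero_right] at hu
    calc |u i l| = ‖u i l‖ := rfl
      _ ≤ ‖u i‖ := norm_le_pi_norm (u i) l
      _ ≤ ‖u‖ := norm_le_pi_norm u i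
      _ ≤ R := hu
  have hdist : ∀ i l, |x i l - y i l| ≤ dist x y := by
    intro i l
    calc |x i l - y i l| = dist (x i l) (y i l) := (Real.dist_eq _ _).symm
      _ ≤ dist (x i) (y i) := dist_le_pi_dist (x i) (y i) l
      _ ≤ dist x y := dist_le_pi_dist x y i
  rw [dist_pi_le_iff (by positivity)]
  intro i
  rw [dist_pi_le_iff (by positivity)]
  intro j
  simp only [Matrix.sub_apply, Matrix.smul_apply, smul_eq_mul, Matrix.mul_apply, Matrix.of_apply,
    Real.dist_eq]
  have hkey : |(∑ l, x i l * x l j) - ∑ l, y i l * y l j| ≤ ↑n * (2 * R * dist x y) := by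
    rw [← Finset.sum_sub_distrib]
    calc |∑ l, (x i l * x l j - y i l * y l j)| ≤ ∑ l, |x i l * x l j - y i l * y l j| :=
          Finset.abs_sum_le_sum_abs _ _
      _ ≤ ∑ _l : Fin n, 2 * R * dist x y := by
          apply Finset.sum_le_sum
          intro l _
          have h1 : x i l * x l j - y i l * y l j
              = x i l * (x l j - y l j) + (x i l - y i l) * y l j := by ring
          rw [h1]
          calc |x i l * (x l j - y l j) + (x i l - y i l) * y l j|
              ≤ |x i l * (x l j - y l j)| + |(x i l - y i l) * y l j| := abs_add_le _ _
            _ = |x i l| * |x l j - y l j| + |x i l - y i l| * |y l j| := by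
                rw [abs_mul, abs_mul]
            _ ≤ R * dist x y + dist x y * R :=
                add_le_add (mul_le_mul (habs x hx i l) (hdist l j) (abs_nonneg _) hR)
                  (mul_le_mul (hdist i l) (habs y hy l j) (abs_nonneg _) hd)
            _ = 2 * R * dist x y := by ring
      _ = ↑n * (2 * R * dist x y) := by
          rw [Finset.sum_const, Finset.card_univ, Fintype.card_fin, nsmul_eq_mul]
  have heq : c₂' * (∑ l, x i l * x l j) - c₂ * A i j - (c₂' * (∑ l, y i l * y l j) - c₂ * A i j)
      = c₂' * ((∑ l, x i l * x l j) - ∑ l, y i l * y l j) := by ring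
  rw [heq, abs_mul, abs_of_nonneg hc₂']
  calc c₂' * |(∑ l, x i l * x l j) - ∑ l, y i l * y l j| ≤ c₂' * (↑n * (2 * R * dist x y)) :=
        mul_le_mul_of_nonneg_left hkey hc₂'
    _ = c₂' * (2 * ↑n * R) * dist x y := by ring


lemma riccati_unique {n : ℕ} (A : Matrix (Fin n) (Fin n) ℝ) (c₂ c₂' T : ℝ) (hc₂' : 0 ≤ c₂')
    (f g : ℝ → Matrix (Fin n) (Fin n) ℝ)
    (hf : ∀ t ∈ Icc (0:ℝ) T, ∀ i j : Fin n,
      HasDerivWithinAt (fun s => f s i j) ((c₂' • (f t * f t) - c₂ • A) i j) (Icc (0:ℝ) T) t)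
    (hg : ∀ t ∈ Icc (0:ℝ) T, ∀ i j : Fin n,
      HasDerivWithinAt (fun s => g s i j) ((c₂' • (g t * g t) - c₂ • A) i j) (Icc (0:ℝ) T) t)
    (hfg : f T = g T) (hT : 0 < T) :
    ∀ t ∈ Icc (0:ℝ) T, f t = g t := by
  classical
  set v : ℝ → (Fin n → Fin n → ℝ) → (Fin n → Fin n → ℝ) :=
    fun _ x => (fun i j => (c₂' • (Matrix.of x * Matrix.of x) - c₂ • A) i j) with hv_def
  have hF' : ∀ t ∈ Icc (0:ℝ) T,
      HasDerivWithinAt (fun s => (fun i j => f s i j : Fin n → Fin n → ℝ)) (v t (f t)) (Icc (0:ℝ) T) t := by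
    intro t ht
    rw [hasDerivWithinAt_pi]
    intro i
    rw [hasDerivWithinAt_pi]
    intro j
    exact hf t ht i j
  have hG' : ∀ t ∈ Icc (0:ℝ) T,
      HasDerivWithinAt (fun s => (fun i j => g s i j : Fin n → Fin n → ℝ)) (v t (g t)) (Icc (0:ℝ) T) t := by
    intro t ht
    rw [hasDerivWithinAt_pi]
    intro i
    rw [hasDerivWithinAt_pi]
    intro j
    exact hg t ht i j
  have hFc : ContinuousOn (fun s => (fun i j => f s i j : Fin n → Fin n → ℝ)) (Icc (0:ℝ) T) :=
    fun t ht => (hF' t ht).continuousWithinAt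
  have hGc : ContinuousOn (fun s => (fun i j => g s i j : Fin n → Fin n → ℝ)) (Icc (0:ℝ) T) :=
    fun t ht => (hG' t ht).continuousWithinAt
  obtain ⟨R1, hR1⟩ := isCompact_Icc.exists_bound_of_continuousOn hFc
  obtain ⟨R2, hR2⟩ := isCompact_Icc.exists_bound_of_continuousOn hGc
  set R : ℝ := max (max R1 R2) 0 with hR_def
  have hR : 0 ≤ R := le_max_right _ _
  have hmemF : ∀ t ∈ Icc (0:ℝ) T,
      (fun i j => f t i j : Fin n → Fin n → ℝ) ∈ Metric.closedBall (0 : Fin n → Fin n → ℝ) R := by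
    intro t ht
    rw [Metric.mem_closedBall, dist_zero_right]
    exact (hR1 t ht).trans ((le_max_left R1 R2).trans (le_max_left _ _))
  have hmemG : ∀ t ∈ Icc (0:ℝ) T,
      (fun i j => g t i j : Fin n → Fin n → ℝ) ∈ Metric.closedBall (0 : Fin n → Fin n → ℝ) R := by
    intro t ht
    rw [Metric.mem_closedBall, dist_zero_right]
    exact (hR2 t ht).trans ((le_max_right R1 R2).trans (le_max_left _ _))
  have hmem_nhds : ∀ t ∈ Ioc (0:ℝ) T, Icc (0:ℝ) T ∈ nhdsWithin t (Iic t) := by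
    intro t ht
    rw [mem_nhdsWithin]
    exact ⟨Ioi 0, isOpen_Ioi, ht.1, fun s hs => ⟨le_of_lt hs.1, hs.2.trans ht.2⟩⟩
  have hv : ∀ t, LipschitzOnWith (Real.toNNReal (c₂' * (2 * n * R))) (v t)
      (Metric.closedBall (0 : Fin n → Fin n → ℝ) R) :=
    fun _ => lip_aux n c₂' hc₂' A c₂ R hR
  have key : EqOn (fun s => (fun i j => f s i j : Fin n → Fin n → ℝ)) (fun s => (fun i j => g s i j : Fin n → Fin n → ℝ))
      (Icc (0:ℝ) T) := by
    apply ODE_solution_unique_of_mem_Icc_left (fun t _ => hv t) hFc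
      (fun t ht => (hF' t ⟨le_of_lt ht.1, ht.2⟩).mono_of_mem_nhdsWithin (hmem_nhds t ht))
      (fun t ht => hmemF t ⟨le_of_lt ht.1, ht.2⟩) hGc
      (fun t ht => (hG' t ⟨le_of_lt ht.1, ht.2⟩).mono_of_mem_nhdsWithin (hmem_nhds t ht))
      (fun t ht => hmemG t ⟨le_of_lt ht.1, ht.2⟩)
      (by funext i j; rw [hfg])
  intro t ht
  have h := key ht
  ext i j
  exact congrFun (congrFun h i) j



theorem main_construction {m n : ℕ} (G : Matrix (Fin m) (Fin n) ℝ)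
    (hG : Function.Injective G.mulVec)
    (c₂ c₂' lam T : ℝ) (hc₂ : 0 < c₂) (hc₂' : 0 < c₂') (hlam : 0 ≤ lam) (hT : 0 < T) :
    ∃ K : ℝ → Matrix (Fin n) (Fin n) ℝ,
      (∀ t ∈ Icc (0:ℝ) T, ∀ i j : Fin n,
          HasDerivWithinAt (fun s => K s i j)
            ((c₂' • (K t * K t) - c₂ • (Gᵀ * G)) i j) (Icc (0:ℝ) T) t) ∧
        K T = lam • (Gᵀ * G) ∧
        (∀ t ∈ Icc (0:ℝ) T, (K t).IsSymm ∧ (K t).PosSemidef) := by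
  classical
  set A := Gᵀ * G with hA_def
  have hApd : A.PosDef := by
    rw [Matrix.posDef_iff_dotProduct_mulVec]
    constructor
    · rw [hA_def, ← Matrix.conjTranspose_eq_transpose_of_trivial]
      exact Matrix.isHermitian_conjTranspose_mul_self G
    · intro x hx
      have hgx : G.mulVec x ≠ 0 := by
        intro h0
        exact hx (hG (by rw [h0, Matrix.mulVec_zero]))
      have hdp : star x ⬝ᵥ (A *ᵥ x) = (G *ᵥ x) ⬝ᵥ (G *ᵥ x) := by
        rw [hA_def, star_trivial, ← Matrix.mulVec_mulVec, Matrix.dotProduct_mulVec,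
          Matrix.vecMul_transpose]
      rw [hdp]
      rcases (show (0:ℝ) ≤ (G *ᵥ x) ⬝ᵥ (G *ᵥ x) from
        Finset.sum_nonneg fun i _ => mul_self_nonneg _).lt_or_eq with h | h
      · exact h
      · exact absurd (dotProduct_self_eq_zero.mp h.symm) hgx
  have hH : A.IsHermitian := hApd.1
  set d : Fin n → ℝ := hH.eigenvalues with hd_def
  have hd : ∀ l, 0 < d l := fun l => hApd.eigenvalues_pos l
  set U : Matrix (Fin n) (Fin n) ℝ := (hH.eigenvectorUnitary : Matrix (Fin n) (Fin n) ℝ)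
    with hU_def
  have hU1 : star U * U = 1 := Matrix.mem_unitaryGroup_iff'.mp hH.eigenvectorUnitary.2
  have spec : A = U * Matrix.diagonal d * star U := by
    have h := hH.spectral_theorem
    rwa [RCLike.ofReal_real_eq_id, Function.id_comp] at h
  set b : Fin n → ℝ := fun l => Real.sqrt (c₂ * d l / c₂') with hb_def
  set w : Fin n → ℝ := fun l => Real.sqrt (c₂ * c₂' * d l) with hw_def
  have hb : ∀ l, 0 < b l := fun l => Real.sqrt_pos.mpr (by have := hd l; positivity)
  have hw : ∀ l, 0 < w l := fun l => Real.sqrt_pos.mpr (by have := hd l; positivity)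
  have hbw : ∀ l, b l * w l = c₂ * d l := by
    intro l
    have hdl := hd l
    rw [hb_def, hw_def]
    simp only
    rw [← Real.sqrt_mul (by positivity),
      show c₂ * d l / c₂' * (c₂ * c₂' * d l) = (c₂ * d l) ^ 2 by field_simp]
    exact Real.sqrt_sq (by positivity)
  have hb2 : ∀ l, c₂' * (b l) ^ 2 = b l * w l := by
    intro l
    have hdl := hd l
    rw [hbw l, hb_def]
    simp only
    rw [Real.sq_sqrt (by positivity)]
    field_simp
  set kf : Fin n → ℝ → ℝ := fun l t => RiccatiAux.sk (lam * d l) (b l) (w l) T t with hkf_def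
  have hkfL : ∀ l, 0 ≤ lam * d l := fun l => mul_nonneg hlam (hd l).le
  set K : ℝ → Matrix (Fin n) (Fin n) ℝ :=
    fun t => U * Matrix.diagonal (fun l => kf l t) * star U with hK_def
  have hKmul : ∀ t, c₂' • (K t * K t) - c₂ • A
      = U * Matrix.diagonal (fun l => c₂' * (kf l t) ^ 2 - c₂ * d l) * star U := by
    intro t
    rw [hK_def]
    simp only
    rw [RiccatiAux.conj_diag_mul U hU1, spec]
    ext i j
    rw [Matrix.sub_apply, Matrix.smul_apply, Matrix.smul_apply,
      RiccatiAux.entry_formula, RiccatiAux.entry_formula, RiccatiAux.entry_formula,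
      smul_eq_mul, smul_eq_mul, Finset.mul_sum, Finset.mul_sum, ← Finset.sum_sub_distrib]
    apply Finset.sum_congr rfl
    intro l _
    ring
  have hKderiv : ∀ t ∈ Icc (0:ℝ) T, ∀ i j : Fin n,
      HasDerivWithinAt (fun s => K s i j) ((c₂' • (K t * K t) - c₂ • A) i j) (Icc (0:ℝ) T) t := by
    intro t ht i j
    rw [hKmul t, RiccatiAux.entry_formula]
    have hrew : (fun s => K s i j) = fun s => ∑ l, U i l * kf l s * U j l := by
      funext s
      rw [hK_def]
      exact RiccatiAux.entry_formula U _ i j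
    rw [hrew]
    apply HasDerivWithinAt.fun_sum
    intro l _
    have hder := ((RiccatiAux.sk_hasDerivAt (hb l) (hkfL l) (hw l).le
      (hb2 l) ht.2).hasDerivWithinAt (s := Icc (0:ℝ) T))
    have h2 := (hder.const_mul (U i l)).mul_const (U j l)
    have hval : U i l * (c₂' * (kf l t) ^ 2 - c₂ * d l) * U j l
        = U i l * (c₂' * RiccatiAux.sk (lam * d l) (b l) (w l) T t ^ 2 - b l * w l) * U j l := by
      rw [hbw l, hkf_def]
    rw [hval]
    exact h2
  have hKT : K T = lam • A := by
    rw [hK_def]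
    simp only
    have hrew : (fun l => kf l T) = fun l => lam * d l := by
      funext l
      exact RiccatiAux.sk_T (hb l)
    rw [hrew, spec,
      show Matrix.diagonal (fun l => lam * d l) = lam • Matrix.diagonal d by
        rw [← Matrix.diagonal_smul]; congr 1,
      Matrix.mul_smul, Matrix.smul_mul]
  have hKsym : ∀ t ∈ Icc (0:ℝ) T, (K t).IsSymm ∧ (K t).PosSemidef := by
    intro t ht
    have hk0 : ∀ l, 0 ≤ kf l t := fun l =>
      RiccatiAux.sk_nonneg (hb l) (hkfL l) (hw l).le ht.2
    have hpsd : (K t).PosSemidef := by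
      have hBB : K t = (U * Matrix.diagonal fun l => Real.sqrt (kf l t)) *
          (U * Matrix.diagonal fun l => Real.sqrt (kf l t))ᴴ := by
        rw [Matrix.conjTranspose_mul, Matrix.diagonal_conjTranspose,
          show (star fun l => Real.sqrt (kf l t)) = fun l => Real.sqrt (kf l t) from
            funext fun l => star_trivial _]
        rw [← Matrix.mul_assoc, Matrix.mul_assoc U, Matrix.diagonal_mul_diagonal, hK_def]
        simp only
        rw [← Matrix.star_eq_conjTranspose,
          show (fun i => Real.sqrt (kf i t) * Real.sqrt (kf i t)) = fun l => kf l t from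
            funext fun l => Real.mul_self_sqrt (hk0 l)]
      rw [hBB]
      exact Matrix.posSemidef_self_mul_conjTranspose _
    refine ⟨?_, hpsd⟩
    rw [Matrix.IsSymm, ← Matrix.conjTranspose_eq_transpose_of_trivial]
    exact hpsd.1
  exact ⟨K, hKderiv, hKT, hKsym⟩

end RiccatiAux

/-- For `c₂, c₂' > 0`, `λ ≥ 0` and `G` an `m × n` full-rank real matrix with
`n ≤ m` (so `GᵀG` is positive definite), the matrix Riccati terminal value problem
`-K' = -c₂' K² + c₂ GᵀG` on `[0,T]`, `K(T) = λ GᵀG`, has a unique `C¹` solution with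
values in the symmetric nonnegative-definite `n × n` matrices. -/
theorem riccati_terminal_value_problem_n_le_m
    {m n : ℕ} (hnm : n ≤ m) (G : Matrix (Fin m) (Fin n) ℝ)
    (hG : Function.Injective G.mulVec)
    (c₂ c₂' lam T : ℝ) (hc₂ : 0 < c₂) (hc₂' : 0 < c₂') (hlam : 0 ≤ lam) (hT : 0 < T) :
    ∃ K : ℝ → Matrix (Fin n) (Fin n) ℝ,
      ((∀ t ∈ Icc (0:ℝ) T, ∀ i j : Fin n,
          HasDerivWithinAt (fun s => K s i j)
            ((c₂' • (K t * K t) - c₂ • (Gᵀ * G)) i j) (Icc (0:ℝ) T) t) ∧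
        K T = lam • (Gᵀ * G) ∧
        (∀ t ∈ Icc (0:ℝ) T, (K t).IsSymm ∧ (K t).PosSemidef)) ∧
      (∀ K' : ℝ → Matrix (Fin n) (Fin n) ℝ,
        ((∀ t ∈ Icc (0:ℝ) T, ∀ i j : Fin n,
            HasDerivWithinAt (fun s => K' s i j)
              ((c₂' • (K' t * K' t) - c₂ • (Gᵀ * G)) i j) (Icc (0:ℝ) T) t) ∧
          K' T = lam • (Gᵀ * G) ∧
          (∀ t ∈ Icc (0:ℝ) T, (K' t).IsSymm ∧ (K' t).PosSemidef)) →
        ∀ t ∈ Icc (0:ℝ) T, K' t = K t) := by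
  obtain ⟨K, hKd, hKT, hKsp⟩ := RiccatiAux.main_construction G hG c₂ c₂' lam T hc₂ hc₂' hlam hT
  refine ⟨K, ⟨hKd, hKT, hKsp⟩, ?_⟩
  rintro K' ⟨hK'd, hK'T, -⟩
  exact RiccatiAux.riccati_unique (Gᵀ * G) c₂ c₂' T hc₂'.le K' K hK'd hKd (by rw [hK'T, hKT]) hT
end

section
/- Let $c_2, c_2' > 0$, $\lambda \ge 0$, and let $G$ be an $m\times n$ real matrix of full rank with $n > m$ (so $GG^*$ is positive definite). Then the matrix Riccati terminal value problem $-\dot K(t) = c_2 I_m - c_2' K(t) G G^* K(t)$ on $[0,T]$ with $K(T) = \lambda I_m$ has a unique solution $K \in C^1([0,T]; S^m)$ which is symmetric nonnegative definite for every $t\in[0,T]$. -/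
open Matrix Set


private lemma rif_den_pos {a lam : ℝ} (ha : 0 < a) (hlam : 0 ≤ lam) {s : ℝ} (hs : 0 ≤ s) :
    0 < a * Real.cosh s + lam * Real.sinh s := by
  nlinarith [Real.one_le_cosh s, Real.sinh_nonneg_iff.mpr hs]

/-- Explicit solution of the scalar Riccati equation `φ' = (b/a) φ² - a b`, `φ(T) = lam`. -/
private noncomputable def rif (a b lam T t : ℝ) : ℝ :=
  a * (lam * Real.cosh (b * (T - t)) + a * Real.sinh (b * (T - t))) /
    (a * Real.cosh (b * (T - t)) + lam * Real.sinh (b * (T - t)))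

private lemma rif_T {a : ℝ} (ha : 0 < a) (b lam T : ℝ) : rif a b lam T T = lam := by
  simp only [rif, sub_self, mul_zero, Real.cosh_zero, Real.sinh_zero, mul_one, add_zero,
    mul_zero, zero_add]
  rw [mul_comm, mul_div_assoc, div_self ha.ne', mul_one]

private lemma rif_nonneg {a b lam T t : ℝ} (ha : 0 < a) (hb : 0 < b) (hlam : 0 ≤ lam)
    (ht : t ≤ T) : 0 ≤ rif a b lam T t := by
  have hs : 0 ≤ b * (T - t) := mul_nonneg hb.le (by linarith)
  have h1 := Real.cosh_pos (x := b * (T - t))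
  have h2 := Real.sinh_nonneg_iff.mpr hs
  exact div_nonneg (by nlinarith [mul_nonneg hlam h1.le, mul_nonneg ha.le h2])
    (rif_den_pos ha hlam hs).le

private lemma rif_identity {a b lam c sh : ℝ} (ha : 0 < a)
    (hpos : 0 < a * c + lam * sh) :
    (b / a) * (a * (lam * c + a * sh) / (a * c + lam * sh)) ^ 2 - a * b
      = (a * (lam * (sh * -b) + a * (c * -b)) * (a * c + lam * sh) -
          a * (lam * c + a * sh) * (a * (sh * -b) + lam * (c * -b))) / (a * c + lam * sh) ^ 2 := by
  field_simp
  ring_nf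

private lemma rif_hasDerivAt {a b lam T t : ℝ} (ha : 0 < a) (hb : 0 < b) (hlam : 0 ≤ lam)
    (ht : t ≤ T) :
    HasDerivAt (rif a b lam T) ((b / a) * (rif a b lam T t) ^ 2 - a * b) t := by
  have hs : 0 ≤ b * (T - t) := mul_nonneg hb.le (by linarith)
  have hu : HasDerivAt (fun s : ℝ => b * (T - s)) (-b) t := by
    simpa using ((hasDerivAt_id t).const_sub T).const_mul b
  have hch : HasDerivAt (fun s : ℝ => Real.cosh (b * (T - s)))
      (Real.sinh (b * (T - t)) * -b) t := (Real.hasDerivAt_cosh _).comp t hu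
  have hsh : HasDerivAt (fun s : ℝ => Real.sinh (b * (T - s)))
      (Real.cosh (b * (T - t)) * -b) t := (Real.hasDerivAt_sinh _).comp t hu
  have hN : HasDerivAt (fun s : ℝ => a * (lam * Real.cosh (b * (T - s)) + a * Real.sinh (b * (T - s))))
      (a * (lam * (Real.sinh (b * (T - t)) * -b) + a * (Real.cosh (b * (T - t)) * -b))) t :=
    ((hch.const_mul lam).add (hsh.const_mul a)).const_mul a
  have hD : HasDerivAt (fun s : ℝ => a * Real.cosh (b * (T - s)) + lam * Real.sinh (b * (T - s)))
      (a * (Real.sinh (b * (T - t)) * -b) + lam * (Real.cosh (b * (T - t)) * -b)) t :=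
    (hch.const_mul a).add (hsh.const_mul lam)
  have hDpos := rif_den_pos ha hlam hs
  have h := hN.div hD hDpos.ne'
  have hval := rif_identity (b := b) ha hDpos
  rw [rif, hval]
  exact h

private lemma riccati_unique {m : ℕ} (A : Matrix (Fin m) (Fin m) ℝ) (c₂ c₂' T : ℝ)
    (hc₂' : 0 ≤ c₂') (hT : 0 < T)
    (K₁ K₂ : ℝ → Matrix (Fin m) (Fin m) ℝ)
    (h₁ : ∀ t ∈ Icc (0:ℝ) T, ∀ i j : Fin m,
      HasDerivWithinAt (fun s => K₁ s i j)
        ((c₂' • (K₁ t * A * K₁ t) - c₂ • (1 : Matrix (Fin m) (Fin m) ℝ)) i j) (Icc (0:ℝ) T) t)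
    (h₂ : ∀ t ∈ Icc (0:ℝ) T, ∀ i j : Fin m,
      HasDerivWithinAt (fun s => K₂ s i j)
        ((c₂' • (K₂ t * A * K₂ t) - c₂ • (1 : Matrix (Fin m) (Fin m) ℝ)) i j) (Icc (0:ℝ) T) t)
    (hend : K₁ T = K₂ T) :
    ∀ t ∈ Icc (0:ℝ) T, K₁ t = K₂ t := by
  classical
  set F : ℝ → (Fin m → Fin m → ℝ) := fun t i j => K₁ t i j - K₂ t i j with hF
  set KP₁ : ℝ → (Fin m → Fin m → ℝ) := fun t i j => K₁ t i j with hKP₁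
  set KP₂ : ℝ → (Fin m → Fin m → ℝ) := fun t i j => K₂ t i j with hKP₂
  have hKP₁c : ContinuousOn KP₁ (Icc (0:ℝ) T) := by
    refine continuousOn_pi.2 fun i => continuousOn_pi.2 fun j => fun t ht => ?_
    exact (h₁ t ht i j).continuousWithinAt
  have hKP₂c : ContinuousOn KP₂ (Icc (0:ℝ) T) := by
    refine continuousOn_pi.2 fun i => continuousOn_pi.2 fun j => fun t ht => ?_
    exact (h₂ t ht i j).continuousWithinAt
  have hFc : ContinuousOn F (Icc (0:ℝ) T) := by
    refine continuousOn_pi.2 fun i => continuousOn_pi.2 fun j => fun t ht => ?_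
    exact ((h₁ t ht i j).continuousWithinAt).sub ((h₂ t ht i j).continuousWithinAt)
  obtain ⟨C₁, hC₁⟩ := isCompact_Icc.exists_bound_of_continuousOn hKP₁c
  obtain ⟨C₂, hC₂⟩ := isCompact_Icc.exists_bound_of_continuousOn hKP₂c
  set C : ℝ := max C₁ C₂ with hC
  have hT0 : (0:ℝ) ∈ Icc (0:ℝ) T := ⟨le_refl _, hT.le⟩
  have hC0 : 0 ≤ C := le_trans (norm_nonneg _) ((hC₁ 0 hT0).trans (le_max_left _ _))
  set AP : Fin m → Fin m → ℝ := fun k l => A k l with hAP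
  set CA : ℝ := ‖AP‖ with hCA
  have hCA0 : 0 ≤ CA := norm_nonneg _
  have hAbd : ∀ k l, |A k l| ≤ CA := by
    intro k l
    calc |A k l| = ‖AP k l‖ := rfl
      _ ≤ ‖AP k‖ := norm_le_pi_norm (AP k) l
      _ ≤ ‖AP‖ := norm_le_pi_norm AP k
  have hK₁bd : ∀ t ∈ Icc (0:ℝ) T, ∀ k l, |K₁ t k l| ≤ C := by
    intro t ht k l
    calc |K₁ t k l| = ‖KP₁ t k l‖ := rfl
      _ ≤ ‖KP₁ t k‖ := norm_le_pi_norm (KP₁ t k) l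
      _ ≤ ‖KP₁ t‖ := norm_le_pi_norm (KP₁ t) k
      _ ≤ C₁ := hC₁ t ht
      _ ≤ C := le_max_left _ _
  have hK₂bd : ∀ t ∈ Icc (0:ℝ) T, ∀ k l, |K₂ t k l| ≤ C := by
    intro t ht k l
    calc |K₂ t k l| = ‖KP₂ t k l‖ := rfl
      _ ≤ ‖KP₂ t k‖ := norm_le_pi_norm (KP₂ t k) l
      _ ≤ ‖KP₂ t‖ := norm_le_pi_norm (KP₂ t) k
      _ ≤ C₂ := hC₂ t ht
      _ ≤ C := le_max_right _ _
  have hFbd : ∀ t, ∀ k l, |F t k l| ≤ ‖F t‖ := by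
    intro t k l
    calc |F t k l| = ‖F t k l‖ := rfl
      _ ≤ ‖F t k‖ := norm_le_pi_norm (F t k) l
      _ ≤ ‖F t‖ := norm_le_pi_norm (F t) k
  have tri : ∀ (X Z : Matrix (Fin m) (Fin m) ℝ) (i j : Fin m) (cX cZ : ℝ),
      0 ≤ cX → 0 ≤ cZ →
      (∀ k l, |X k l| ≤ cX) → (∀ k l, |Z k l| ≤ cZ) →
      |(X * A * Z) i j| ≤ (m : ℝ) * m * (cX * (CA * cZ)) := by
    intro X Z i j cX cZ hcX hcZ hX hZ
    have hE : (X * A * Z) i j = ∑ l, ∑ k, X i k * A k l * Z l j := by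
      rw [Matrix.mul_apply]
      refine Finset.sum_congr rfl fun l _ => ?_
      rw [Matrix.mul_apply, Finset.sum_mul]
    rw [hE]
    calc |∑ l, ∑ k, X i k * A k l * Z l j| ≤ ∑ l, ∑ k, |X i k * A k l * Z l j| :=
          (Finset.abs_sum_le_sum_abs _ _).trans
            (Finset.sum_le_sum fun l _ => Finset.abs_sum_le_sum_abs _ _)
      _ ≤ ∑ _l : Fin m, ∑ _k : Fin m, cX * (CA * cZ) := by
          refine Finset.sum_le_sum fun l _ => Finset.sum_le_sum fun k _ => ?_
          rw [abs_mul, abs_mul]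
          calc |X i k| * |A k l| * |Z l j|
              ≤ cX * CA * cZ := by
                apply mul_le_mul (mul_le_mul (hX i k) (hAbd k l) (abs_nonneg _) hcX)
                  (hZ l j) (abs_nonneg _) (mul_nonneg hcX hCA0)
            _ = cX * (CA * cZ) := by ring
      _ = (m:ℝ) * m * (cX * (CA * cZ)) := by
          simp [Finset.sum_const, Finset.card_univ, mul_assoc]
  set L : ℝ := c₂' * ((m:ℝ) * m * (C * CA) + (m:ℝ) * m * (CA * C)) with hL
  have hL0 : 0 ≤ L := by positivity
  set Dval : ℝ → (Fin m → Fin m → ℝ) := fun t i j =>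
    (c₂' • (K₁ t * A * K₁ t) - c₂ • (1 : Matrix (Fin m) (Fin m) ℝ)) i j -
      (c₂' • (K₂ t * A * K₂ t) - c₂ • (1 : Matrix (Fin m) (Fin m) ℝ)) i j with hDval
  have hDval_eq : ∀ t i j, Dval t i j =
      c₂' * ((K₁ t * A * (K₁ t - K₂ t)) i j + ((K₁ t - K₂ t) * A * K₂ t) i j) := by
    intro t i j
    have hM : K₁ t * A * K₁ t - K₂ t * A * K₂ t
        = K₁ t * A * (K₁ t - K₂ t) + (K₁ t - K₂ t) * A * K₂ t := by noncomm_ring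
    have hMe := congrFun (congrFun hM i) j
    simp only [Matrix.sub_apply, Matrix.add_apply] at hMe
    simp only [hDval, Matrix.sub_apply, Matrix.smul_apply, smul_eq_mul]
    linear_combination c₂' * hMe
  have hDbd : ∀ t ∈ Icc (0:ℝ) T, ∀ i j, |Dval t i j| ≤ L * ‖F t‖ := by
    intro t ht i j
    rw [hDval_eq t i j]
    have hFent : ∀ k l, |(K₁ t - K₂ t) k l| ≤ ‖F t‖ := by
      intro k l
      have : (K₁ t - K₂ t) k l = F t k l := by simp [hF, Matrix.sub_apply]
      rw [this]; exact hFbd t k l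
    have t1 := tri (K₁ t) (K₁ t - K₂ t) i j C ‖F t‖ hC0 (norm_nonneg _)
      (hK₁bd t ht) hFent
    have t2 := tri (K₁ t - K₂ t) (K₂ t) i j ‖F t‖ C (norm_nonneg _) hC0
      hFent (hK₂bd t ht)
    calc |c₂' * ((K₁ t * A * (K₁ t - K₂ t)) i j + ((K₁ t - K₂ t) * A * K₂ t) i j)|
        = c₂' * |(K₁ t * A * (K₁ t - K₂ t)) i j + ((K₁ t - K₂ t) * A * K₂ t) i j| := by
          rw [abs_mul, abs_of_nonneg hc₂']
      _ ≤ c₂' * (|(K₁ t * A * (K₁ t - K₂ t)) i j| + |((K₁ t - K₂ t) * A * K₂ t) i j|) :=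
          mul_le_mul_of_nonneg_left (abs_add_le _ _) hc₂'
      _ ≤ c₂' * ((m:ℝ) * m * (C * (CA * ‖F t‖)) + (m:ℝ) * m * (‖F t‖ * (CA * C))) :=
          mul_le_mul_of_nonneg_left (add_le_add t1 t2) hc₂'
      _ = L * ‖F t‖ := by rw [hL]; ring
  have hFderiv : ∀ t ∈ Icc (0:ℝ) T, HasDerivWithinAt F (Dval t) (Icc (0:ℝ) T) t := by
    intro t ht
    exact hasDerivWithinAt_pi.2 fun i => hasDerivWithinAt_pi.2 fun j =>
      ((h₁ t ht i j).sub (h₂ t ht i j))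
  set g : ℝ → (Fin m → Fin m → ℝ) := fun s => F (T - s) with hg
  have hmaps : MapsTo (fun s : ℝ => T - s) (Icc (0:ℝ) T) (Icc (0:ℝ) T) := by
    intro x hx
    simp only [mem_Icc] at hx ⊢
    constructor <;> linarith [hx.1, hx.2]
  have hgderiv : ∀ s ∈ Icc (0:ℝ) T,
      HasDerivWithinAt g ((-1 : ℝ) • Dval (T - s)) (Icc (0:ℝ) T) s := by
    intro s hs
    exact HasDerivWithinAt.scomp s (hFderiv (T - s) (hmaps hs))
      (((hasDerivAt_id s).const_sub T).hasDerivWithinAt) hmaps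
  have hgc : ContinuousOn g (Icc (0:ℝ) T) :=
    hFc.comp ((continuous_const.sub continuous_id).continuousOn) hmaps
  have hgIci : ∀ s ∈ Ico (0:ℝ) T,
      HasDerivWithinAt g ((-1 : ℝ) • Dval (T - s)) (Ici s) s := by
    intro s hs
    exact (hgderiv s ⟨hs.1, hs.2.le⟩).mono_of_mem_nhdsWithin (Icc_mem_nhdsGE_of_mem hs)
  have hFT : F T = 0 := by
    funext i j
    simp [hF, hend]
  have hga : ‖g 0‖ ≤ 0 := by
    have : g 0 = 0 := by rw [hg]; simp [hFT]
    rw [this, norm_zero]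
  have hbound : ∀ s ∈ Ico (0:ℝ) T, ‖(-1 : ℝ) • Dval (T - s)‖ ≤ L * ‖g s‖ + 0 := by
    intro s hs
    rw [neg_one_smul, norm_neg, add_zero]
    have hTs : T - s ∈ Icc (0:ℝ) T := hmaps ⟨hs.1, hs.2.le⟩
    refine (pi_norm_le_iff_of_nonneg (mul_nonneg hL0 (norm_nonneg _))).2 fun i => ?_
    refine (pi_norm_le_iff_of_nonneg (mul_nonneg hL0 (norm_nonneg _))).2 fun j => ?_
    exact hDbd (T - s) hTs i j
  have key := norm_le_gronwallBound_of_norm_deriv_right_le hgc hgIci hga hbound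
  intro t ht
  have hts : T - t ∈ Icc (0:ℝ) T := hmaps ht
  have h0 := key (T - t) hts
  rw [gronwallBound_ε0_δ0] at h0
  have hg0 : g (T - t) = 0 := norm_le_zero_iff.mp h0
  have hFt : F t = 0 := by
    have h' : F (T - (T - t)) = 0 := hg0
    rwa [show T - (T - t) = t by ring] at h'
  ext i j
  have := congrFun (congrFun hFt i) j
  simpa [hF, sub_eq_zero] using this

/-- For `c₂, c₂' > 0`, `λ ≥ 0` and `G` an `m × n` full-rank real matrix with
`n > m` (so `GGᵀ` is positive definite), the matrix Riccati terminal value problem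
`-K' = c₂ Iₘ - c₂' K GGᵀ K` on `[0,T]`, `K(T) = λ Iₘ`, has a unique `C¹` solution with
values in the symmetric nonnegative-definite `m × m` matrices. -/
theorem riccati_terminal_value_problem_n_gt_m
    {m n : ℕ} (hmn : m < n) (G : Matrix (Fin m) (Fin n) ℝ)
    (hG : Function.Surjective G.mulVec)
    (c₂ c₂' lam T : ℝ) (hc₂ : 0 < c₂) (hc₂' : 0 < c₂') (hlam : 0 ≤ lam) (hT : 0 < T) :
    ∃ K : ℝ → Matrix (Fin m) (Fin m) ℝ,
      ((∀ t ∈ Icc (0:ℝ) T, ∀ i j : Fin m,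
          HasDerivWithinAt (fun s => K s i j)
            ((c₂' • (K t * (G * Gᵀ) * K t) - c₂ • (1 : Matrix (Fin m) (Fin m) ℝ)) i j)
            (Icc (0:ℝ) T) t) ∧
        K T = lam • (1 : Matrix (Fin m) (Fin m) ℝ) ∧
        (∀ t ∈ Icc (0:ℝ) T, (K t).IsSymm ∧ (K t).PosSemidef)) ∧
      (∀ K' : ℝ → Matrix (Fin m) (Fin m) ℝ,
        ((∀ t ∈ Icc (0:ℝ) T, ∀ i j : Fin m,
            HasDerivWithinAt (fun s => K' s i j)
              ((c₂' • (K' t * (G * Gᵀ) * K' t) - c₂ • (1 : Matrix (Fin m) (Fin m) ℝ)) i j)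
              (Icc (0:ℝ) T) t) ∧
          K' T = lam • (1 : Matrix (Fin m) (Fin m) ℝ) ∧
          (∀ t ∈ Icc (0:ℝ) T, (K' t).IsSymm ∧ (K' t).PosSemidef)) →
        ∀ t ∈ Icc (0:ℝ) T, K' t = K t) := by
  classical
  set A : Matrix (Fin m) (Fin m) ℝ := G * Gᵀ with hAdef
  have hAPD : A.PosDef := by
    have hAherm : A.IsHermitian := by
      have h := Matrix.isHermitian_mul_conjTranspose_self G
      rwa [Matrix.conjTranspose_eq_transpose_of_trivial] at h
    refine Matrix.posDef_iff_dotProduct_mulVec.mpr ⟨hAherm, fun x hx => ?_⟩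
    have hTx : Gᵀ *ᵥ x ≠ 0 := by
      intro hzx
      apply hx
      have hzero : ∀ z : Fin m → ℝ, x ⬝ᵥ z = 0 := by
        intro z
        obtain ⟨w, rfl⟩ := hG z
        rw [Matrix.dotProduct_mulVec, ← Matrix.mulVec_transpose, hzx, zero_dotProduct]
      exact dotProduct_self_eq_zero.mp (hzero x)
    have h1 : star x ⬝ᵥ A *ᵥ x = (Gᵀ *ᵥ x) ⬝ᵥ (Gᵀ *ᵥ x) := by
      rw [star_trivial, hAdef, ← Matrix.mulVec_mulVec, Matrix.dotProduct_mulVec,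
        ← Matrix.mulVec_transpose]
    rw [h1]
    have hge : 0 ≤ (Gᵀ *ᵥ x) ⬝ᵥ (Gᵀ *ᵥ x) := Finset.sum_nonneg fun i _ => mul_self_nonneg _
    exact lt_of_le_of_ne hge (fun h => hTx (dotProduct_self_eq_zero.mp h.symm))
  have hH : A.IsHermitian := hAPD.1
  set U : Matrix (Fin m) (Fin m) ℝ := (hH.eigenvectorUnitary : Matrix (Fin m) (Fin m) ℝ) with hU
  set d : Fin m → ℝ := hH.eigenvalues with hd
  have hU1 : U * star U = 1 := Matrix.mem_unitaryGroup_iff.mp hH.eigenvectorUnitary.2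
  have hU2 : star U * U = 1 := Matrix.mem_unitaryGroup_iff'.mp hH.eigenvectorUnitary.2
  have hspec : A = U * Matrix.diagonal d * star U := by
    have h := hH.spectral_theorem
    simpa using h
  have hdpos : ∀ k, 0 < d k := fun k => hAPD.eigenvalues_pos k
  have hEntry : ∀ (f : Fin m → ℝ) (i j : Fin m),
      (U * Matrix.diagonal f * star U) i j = ∑ k, U i k * f k * U j k := by
    intro f i j
    rw [Matrix.mul_apply]
    refine Finset.sum_congr rfl fun k _ => ?_
    rw [Matrix.mul_diagonal, Matrix.star_apply, star_trivial]
  have cancel : ∀ X : Matrix (Fin m) (Fin m) ℝ, star U * (U * X) = X := fun X => by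
    rw [← Matrix.mul_assoc, hU2, Matrix.one_mul]
  have hKAK : ∀ f g : Fin m → ℝ,
      (U * Matrix.diagonal f * star U) * A * (U * Matrix.diagonal g * star U)
        = U * Matrix.diagonal (fun k => f k * (d k * g k)) * star U := by
    intro f g
    rw [hspec]
    simp only [Matrix.mul_assoc, cancel]
    rw [← Matrix.mul_assoc (Matrix.diagonal d) (Matrix.diagonal g) (star U),
      Matrix.diagonal_mul_diagonal,
      ← Matrix.mul_assoc (Matrix.diagonal f) (Matrix.diagonal fun i => d i * g i) (star U),
      Matrix.diagonal_mul_diagonal]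
  have hsmul : ∀ (c : ℝ) (f : Fin m → ℝ),
      c • (U * Matrix.diagonal f * star U) = U * Matrix.diagonal (fun k => c * f k) * star U := by
    intro c f
    rw [show (fun k => c * f k) = c • f from rfl, Matrix.diagonal_smul, mul_smul_comm,
      smul_mul_assoc]
  have hone : ∀ c : ℝ, (c • (1 : Matrix (Fin m) (Fin m) ℝ))
      = U * Matrix.diagonal (fun _ => c) * star U := by
    intro c
    rw [← Matrix.smul_one_eq_diagonal, mul_smul_comm, Matrix.mul_one, smul_mul_assoc, hU1]
  have hsub : ∀ f g : Fin m → ℝ,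
      U * Matrix.diagonal f * star U - U * Matrix.diagonal g * star U
        = U * Matrix.diagonal (fun k => f k - g k) * star U := by
    intro f g
    rw [← Matrix.sub_mul, ← Matrix.mul_sub, Matrix.diagonal_sub]
  -- scalar data
  set a : Fin m → ℝ := fun k => Real.sqrt (c₂ / (c₂' * d k)) with ha
  set b : Fin m → ℝ := fun k => Real.sqrt (c₂ * (c₂' * d k)) with hb
  have h0 : ∀ k, 0 < c₂' * d k := fun k => mul_pos hc₂' (hdpos k)
  have hapos : ∀ k, 0 < a k := fun k => Real.sqrt_pos.mpr (div_pos hc₂ (h0 k))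
  have hbpos : ∀ k, 0 < b k := fun k => Real.sqrt_pos.mpr (mul_pos hc₂ (h0 k))
  have hba : ∀ k, b k / a k = c₂' * d k := by
    intro k
    have h1 : a k * (c₂' * d k) = b k := by
      rw [ha, hb]
      simp only
      nth_rewrite 2 [show c₂' * d k = Real.sqrt ((c₂' * d k) ^ 2) from
        (Real.sqrt_sq (h0 k).le).symm]
      rw [← Real.sqrt_mul (div_pos hc₂ (h0 k)).le]
      congr 1
      field_simp [hc₂'.ne', (hdpos k).ne']
    rw [← h1, mul_comm, mul_div_assoc, div_self (hapos k).ne', mul_one]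
  have hab : ∀ k, a k * b k = c₂ := by
    intro k
    rw [ha, hb]
    simp only
    rw [← Real.sqrt_mul (div_pos hc₂ (h0 k)).le,
      show c₂ / (c₂' * d k) * (c₂ * (c₂' * d k)) = c₂ ^ 2 by
        field_simp [hc₂'.ne', (hdpos k).ne'],
      Real.sqrt_sq hc₂.le]
  set Φ : ℝ → Fin m → ℝ := fun t k => rif (a k) (b k) lam T t with hΦ
  set K : ℝ → Matrix (Fin m) (Fin m) ℝ := fun t => U * Matrix.diagonal (Φ t) * star U with hK
  -- key identity
  have hKey : ∀ t, c₂' • (K t * A * K t) - c₂ • (1 : Matrix (Fin m) (Fin m) ℝ)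
      = U * Matrix.diagonal (fun k => c₂' * d k * (Φ t k) ^ 2 - c₂) * star U := by
    intro t
    rw [hK]
    simp only
    rw [hKAK (Φ t) (Φ t), hsmul, hone c₂, hsub,
      show (fun k => c₂' * (Φ t k * (d k * Φ t k)) - c₂)
          = fun k => c₂' * d k * Φ t k ^ 2 - c₂ from funext fun k => by ring]
  -- existence facts
  have hKd : ∀ t ∈ Icc (0:ℝ) T, ∀ i j : Fin m,
      HasDerivWithinAt (fun s => K s i j)
        ((c₂' • (K t * A * K t) - c₂ • (1 : Matrix (Fin m) (Fin m) ℝ)) i j)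
        (Icc (0:ℝ) T) t := by
    intro t ht i j
    have hfun : (fun s => K s i j) = fun s => ∑ k, U i k * Φ s k * U j k :=
      funext fun s => hEntry (Φ s) i j
    rw [hfun, show ((c₂' • (K t * A * K t) - c₂ • (1 : Matrix (Fin m) (Fin m) ℝ)) i j)
        = ∑ k, U i k * (c₂' * d k * (Φ t k) ^ 2 - c₂) * U j k from by
      rw [hKey t]; exact hEntry _ i j]
    refine (HasDerivAt.fun_sum fun k _ => ?_).hasDerivWithinAt
    have h := rif_hasDerivAt (hapos k) (hbpos k) hlam ht.2
    rw [hba k, hab k] at h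
    exact (h.const_mul (U i k)).mul_const (U j k)
  have hKT : K T = lam • (1 : Matrix (Fin m) (Fin m) ℝ) := by
    rw [hK]
    simp only
    rw [show Φ T = fun _ => lam from funext fun k => rif_T (hapos k) _ _ _]
    exact (hone lam).symm
  have hKsp : ∀ t ∈ Icc (0:ℝ) T, (K t).IsSymm ∧ (K t).PosSemidef := by
    intro t ht
    have hnn : ∀ k, 0 ≤ Φ t k := fun k => rif_nonneg (hapos k) (hbpos k) hlam ht.2
    have hps := (Matrix.posSemidef_diagonal_iff.mpr hnn).mul_mul_conjTranspose_same U
    rw [← Matrix.star_eq_conjTranspose] at hps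
    refine ⟨?_, hps⟩
    have hh := hps.1
    rwa [Matrix.IsHermitian, Matrix.conjTranspose_eq_transpose_of_trivial] at hh
  refine ⟨K, ⟨hKd, hKT, hKsp⟩, ?_⟩
  rintro K'' ⟨hd'', hT'', _⟩
  exact riccati_unique A c₂ c₂' T hc₂'.le hT K'' K hd'' hKd (by rw [hT'', hKT])
end
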